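/- Under the same setting, for each job j and any admissible schedule s'_j (s'_j(t) ∈ [0,1], ∑_t s'_j(t) = 1, supported in the admissible window), the payment satisfies λᵀ P^{(j)} s^I_j ≤ λᵀ P^{(j)} s'_j; i.e., no job has incentive to unilaterally deviate from the RAR schedule under marginal prices. -/

import Mathlib

/-- A fractional schedule is feasible for the convex relaxation. -/
def Feasible {J : Type*} [Fintype J] {T : ℕ} (A : J → Finset (Fin T))
    (s : J → Fin T → ℝ) : Prop :=
  (∀ j t, s j t ∈ Set.Icc (0 : ℝ) 1) ∧ (∀ j, ∑ t, s j t = 1) ∧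
    (∀ j t, t ∉ A j → s j t = 0)

/-- The aggregate load induced by a schedule. -/
def aggLoad {J : Type*} [Fintype J] {T : ℕ} (P : J → Matrix (Fin T) (Fin T) ℝ)
    (s : J → Fin T → ℝ) : Fin T → ℝ :=
  fun τ => ∑ j, ∑ t, P j τ t * s j t

/-- Self-scheduling: under the marginal prices `λ = ∇Φ(L^R)` of the convex
relaxation, for each job `j` and any admissible schedule `s'_j` (entries in
`[0,1]`, summing to 1, supported in the admissible window), the payment of the
RAR integral schedule `s^I_j` (whose support lies in `supp(s^R_j)`) satisfies
`λᵀ P^{(j)} s^I_j ≤ λᵀ P^{(j)} s'_j`: no job can profit by unilaterally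
deviating. -/
theorem stmt12 {J : Type*} [Fintype J] {T : ℕ}
    (p : J → ℝ) (d : J → ℕ) (P : J → Matrix (Fin T) (Fin T) ℝ)
    (hP : ∀ j (t' t : Fin T),
      P j t' t = if t ≤ t' ∧ (t' : ℕ) ≤ (t : ℕ) + d j - 1 then p j else 0)
    (A : J → Finset (Fin T))
    (Φ : (Fin T → ℝ) → ℝ) (hΦconv : ConvexOn ℝ Set.univ Φ)
    (hΦdiff : Differentiable ℝ Φ)
    (sR : J → Fin T → ℝ) (hfeas : Feasible A sR)
    (hopt : ∀ s, Feasible A s → Φ (aggLoad P sR) ≤ Φ (aggLoad P s))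
    (lam : Fin T → ℝ)
    (hlam : ∀ τ, lam τ = fderiv ℝ Φ (aggLoad P sR) (Pi.single τ 1))
    (sI : J → Fin T → ℝ)
    (hI01 : ∀ j t, sI j t = 0 ∨ sI j t = 1)
    (hIsum : ∀ j, ∑ t, sI j t = 1)
    (hsupp : ∀ j t, 0 < sI j t → 0 < sR j t) :
    ∀ j, ∀ s' : Fin T → ℝ,
      (∀ t, s' t ∈ Set.Icc (0 : ℝ) 1) → (∑ t, s' t = 1) →
      (∀ t, t ∉ A j → s' t = 0) →
      ∑ τ, lam τ * (∑ t, P j τ t * sI j t)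
        ≤ ∑ τ, lam τ * (∑ t, P j τ t * s' t) := by
  classical
  intro j s' hs'01 hs'sum hs'supp
  obtain ⟨h01, hsum, hAsupp⟩ := hfeas
  set L : Fin T → ℝ := aggLoad P sR with hLdef
  set c : Fin T → ℝ := fun u => ∑ τ, lam τ * P j τ u with hc
  have hmemA : ∀ u, 0 < sR j u → u ∈ A j := by
    intro u hu
    by_contra h
    exact absurd (hAsupp j u h) (ne_of_gt hu)
  -- Key lemma: slots in the support of sR j have minimal marginal cost
  have key : ∀ t t' : Fin T, 0 < sR j t → t' ∈ A j → c t ≤ c t' := by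
    intro t t' ht htA'
    rcases eq_or_ne t t' with rfl | htt
    · exact le_refl _
    have htA : t ∈ A j := hmemA t ht
    have h1 : sR j t + sR j t' ≤ 1 := by
      have hsub : ({t, t'} : Finset (Fin T)) ⊆ Finset.univ := Finset.subset_univ _
      have := Finset.sum_le_sum_of_subset_of_nonneg hsub
        (fun i _ _ => (h01 j i).1)
      rw [Finset.sum_pair htt, hsum j] at this
      exact this
    set ε0 : ℝ := min (sR j t) (1 - sR j t') with hε0
    have hε0pos : 0 < ε0 := lt_min ht (by linarith)
    set v : Fin T → ℝ := fun τ => P j τ t' - P j τ t with hv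
    set sfun : ℝ → J → Fin T → ℝ := fun ε => Function.update sR j
      (fun u => sR j u + ε * ((if u = t' then (1:ℝ) else 0) - if u = t then 1 else 0))
      with hsfun
    -- feasibility of the perturbed schedule
    have hb : ∀ u, sR j u ∈ Set.Icc (0:ℝ) 1 := h01 j
    have hsj : ∑ u, sR j u = 1 := hsum j
    have hAj : ∀ u, u ∉ A j → sR j u = 0 := hAsupp j
    have hfeasε : ∀ ε, 0 ≤ ε → ε ≤ ε0 → Feasible A (sfun ε) := by
      intro ε hε1 hε2
      have hεt : ε ≤ sR j t := le_trans hε2 (min_le_left _ _)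
      have hεt' : ε ≤ 1 - sR j t' := le_trans hε2 (min_le_right _ _)
      refine ⟨?_, ?_, ?_⟩
      · intro j' u
        rcases eq_or_ne j' j with rfl | hne
        · simp only [hsfun, Function.update_self]
          by_cases hu' : u = t'
          · subst hu'
            have hne2 : u ≠ t := Ne.symm htt
            rw [if_pos rfl, if_neg hne2, Set.mem_Icc]
            constructor
            · have := (hb u).1; linarith
            · linarith
          · by_cases hu : u = t
            · subst hu
              rw [if_neg hu', if_pos rfl, Set.mem_Icc]
              have h0 := (hb u).1
              have h1' := (hb u).2
              constructor <;> linarith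
            · rw [if_neg hu', if_neg hu, Set.mem_Icc]
              have h0 := (hb u).1
              have h1' := (hb u).2
              constructor <;> linarith
        · simp only [hsfun, Function.update_of_ne hne]
          exact h01 j' u
      · intro j'
        rcases eq_or_ne j' j with rfl | hne
        · simp only [hsfun, Function.update_self]
          rw [Finset.sum_add_distrib]
          have heq : ∑ u : Fin T, ε * ((if u = t' then (1:ℝ) else 0) - if u = t then 1 else 0)
              = ε * ((∑ u : Fin T, if u = t' then (1:ℝ) else 0)
                - ∑ u : Fin T, if u = t then (1:ℝ) else 0) := by
            rw [← Finset.mul_sum]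
            congr 1
            exact Finset.sum_sub_distrib _ _
          rw [heq, hsj]
          simp
        · simp only [hsfun, Function.update_of_ne hne]
          exact hsum j'
      · intro j' u hu
        rcases eq_or_ne j' j with rfl | hne
        · simp only [hsfun, Function.update_self]
          have hut : u ≠ t := fun h => hu (h ▸ htA)
          have hut' : u ≠ t' := fun h => hu (h ▸ htA')
          rw [if_neg hut', if_neg hut, hAj u hu]
          ring
        · simp only [hsfun, Function.update_of_ne hne]
          exact hAsupp j' u hu
    -- the perturbed aggregate load
    have hload : ∀ ε : ℝ, aggLoad P (sfun ε) = L + ε • v := by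
      intro ε
      funext τ
      show (∑ j', ∑ u, P j' τ u * sfun ε j' u) = L τ + ε * v τ
      have hsplit : ∀ j' : J, ∑ u, P j' τ u * sfun ε j' u
          = (∑ u, P j' τ u * sR j' u) + (if j' = j then ε * v τ else 0) := by
        intro j'
        rcases eq_or_ne j' j with rfl | hne
        · simp only [if_pos rfl, hsfun, Function.update_self]
          have hterm : ∀ u : Fin T, P j' τ u *
              (sR j' u + ε * ((if u = t' then (1:ℝ) else 0) - if u = t then 1 else 0))
              = P j' τ u * sR j' u
                + ε * ((if u = t' then P j' τ u else 0) - if u = t then P j' τ u else 0) := by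
            intro u; split_ifs <;> ring
          simp only [hterm]
          rw [Finset.sum_add_distrib]
          congr 1
          rw [← Finset.mul_sum, Finset.sum_sub_distrib]
          simp [hv, Finset.sum_ite_eq']
        · simp only [if_neg hne, hsfun, Function.update_of_ne hne, add_zero]
      simp only [hsplit]
      rw [Finset.sum_add_distrib, Finset.sum_ite_eq' Finset.univ j
        (fun _ => ε * v τ)]
      simp [hLdef, aggLoad]
    -- derivative of ε ↦ Φ(L + ε • v) at 0 is fderiv Φ L v, and it is ≥ 0
    have hcurve : HasDerivAt (fun ε : ℝ => L + ε • v) v 0 := by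
      have h1 : HasDerivAt (fun ε : ℝ => ε • v) ((1:ℝ) • v) 0 :=
        (hasDerivAt_id (0:ℝ)).smul_const v
      simpa using h1.const_add L
    have hg0 : L + (0:ℝ) • v = L := by simp
    have hd : HasDerivAt (fun ε : ℝ => Φ (L + ε • v)) (fderiv ℝ Φ L v) 0 := by
      have hF : HasFDerivAt Φ (fderiv ℝ Φ L) ((fun ε : ℝ => L + ε • v) 0) := by
        simpa using (hΦdiff L).hasFDerivAt
      exact hF.comp_hasDerivAt 0 hcurve
    have hnn : 0 ≤ fderiv ℝ Φ L v := by
      have htend : Filter.Tendsto (slope (fun ε : ℝ => Φ (L + ε • v)) 0)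
          (nhdsWithin 0 (Set.Ioi 0)) (nhds (fderiv ℝ Φ L v)) :=
        (hasDerivAt_iff_tendsto_slope.mp hd).mono_left
          (nhdsWithin_mono _ (fun x hx => ne_of_gt hx))
      refine ge_of_tendsto htend ?_
      filter_upwards [Ioc_mem_nhdsGT_of_mem ⟨le_refl (0:ℝ), hε0pos⟩] with ε hε
      have hΦle : Φ L ≤ Φ (L + ε • v) := by
        have := hopt (sfun ε) (hfeasε ε hε.1.le hε.2)
        rwa [hload ε] at this
      rw [slope_def_field]
      have : (0:ℝ) ≤ (Φ (L + ε • v) - Φ (L + (0:ℝ) • v)) / (ε - 0) := by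
        apply div_nonneg
        · rw [hg0]; linarith
        · simp [hε.1.le]
      simpa [div_eq_inv_mul] using this
    -- express fderiv Φ L v via lam
    have hvdecomp : v = ∑ τ : Fin T, v τ • (Pi.single τ 1 : Fin T → ℝ) := by
      funext u
      rw [Finset.sum_apply]
      simp only [Pi.smul_apply, Pi.single_apply, smul_eq_mul, mul_ite, mul_one, mul_zero]
      rw [Finset.sum_ite_eq Finset.univ u v]
      simp
    have hlin : fderiv ℝ Φ L v = ∑ τ, v τ * lam τ := by
      conv_lhs => rw [hvdecomp]
      rw [map_sum]
      refine Finset.sum_congr rfl fun τ _ => ?_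
      rw [map_smul, hlam τ, smul_eq_mul]
    have hdiff : c t' - c t = ∑ τ, v τ * lam τ := by
      rw [hc]
      simp only [← Finset.sum_sub_distrib]
      refine Finset.sum_congr rfl fun τ _ => ?_
      simp only [hv]; ring
    rw [hlin] at hnn
    linarith [hdiff ▸ hnn]
  -- swap sums to express payments via c
  have swap : ∀ w : Fin T → ℝ,
      ∑ τ, lam τ * (∑ t, P j τ t * w t) = ∑ t, c t * w t := by
    intro w
    simp only [Finset.mul_sum, hc, Finset.sum_mul]
    rw [Finset.sum_comm]
    refine Finset.sum_congr rfl fun t _ => Finset.sum_congr rfl fun τ _ => by ring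
  rw [swap (sI j), swap s']
  -- pick the slot where sI j is 1
  have hex : ∃ t0, sI j t0 = 1 := by
    by_contra h
    push_neg at h
    have hz : ∀ t, sI j t = 0 := fun t => (hI01 j t).resolve_right (h t)
    have h1 := hIsum j
    rw [Finset.sum_congr rfl (fun t _ => hz t)] at h1
    simp at h1
  obtain ⟨t0, ht0⟩ := hex
  have ht0R : 0 < sR j t0 := hsupp j t0 (by rw [ht0]; norm_num)
  have ht0A : t0 ∈ A j := hmemA t0 ht0R
  -- LHS ≤ c t0
  have hL1 : ∑ t, c t * sI j t ≤ c t0 := by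
    calc ∑ t, c t * sI j t ≤ ∑ t, c t0 * sI j t := by
          refine Finset.sum_le_sum fun t _ => ?_
          rcases hI01 j t with h0 | h1
          · simp [h0]
          · have : 0 < sR j t := hsupp j t (by rw [h1]; norm_num)
            have := key t t0 this ht0A
            rw [h1]; simpa using this
      _ = c t0 := by rw [← Finset.mul_sum, hIsum j, mul_one]
  -- c t0 ≤ RHS
  have hL2 : c t0 ≤ ∑ t, c t * s' t := by
    calc c t0 = ∑ t, c t0 * s' t := by rw [← Finset.mul_sum, hs'sum, mul_one]
      _ ≤ ∑ t, c t * s' t := by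
          refine Finset.sum_le_sum fun t _ => ?_
          by_cases htA : t ∈ A j
          · exact mul_le_mul_of_nonneg_right (key t0 t ht0R htA) (hs'01 t).1
          · simp [hs'supp t htA]
  linarith
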